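/- Let G be a finitely generated group and (d_i) a sequence of G-equivariant pseudometrics on G induced by based actions on δ_i-hyperbolic spaces. If ℓ_i denotes the sum over a fixed finite generating set S of d_i(1, s), and δ_i/ℓ_i → 0, then the rescaled pseudometrics d_i/ℓ_i have a subsequence converging (pointwise on G × G) to a pseudometric which is 0-hyperbolic, i.e., the limit pseudometric satisfies the four-point condition of real trees. -/

import Mathlib

open Filter

/-- The Gromov product of `x` and `y` at `w` with respect to `d`. -/
noncomputable def GromovProd {X : Type*} (d : X → X → ℝ) (x y w : X) : ℝ :=
  (d x w + d y w - d x y) / 2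

/-- `d` is a pseudometric. -/
def IsPseudoMetric {X : Type*} (d : X → X → ℝ) : Prop :=
  (∀ x, d x x = 0) ∧ (∀ x y, d x y = d y x) ∧ ∀ x y z, d x z ≤ d x y + d y z

/-- `d` is `δ`-hyperbolic: the Gromov four-point condition holds with constant `δ`. -/
def IsDeltaHyp {X : Type*} (d : X → X → ℝ) (δ : ℝ) : Prop :=
  ∀ x y z w : X,
    min (GromovProd d x z w) (GromovProd d y z w) - δ ≤ GromovProd d x y w

/-- `d` is equivariant under left translation. -/
def IsEquivariant {G : Type*} [Group G] (d : G → G → ℝ) : Prop :=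
  ∀ g x y : G, d (g * x) (g * y) = d x y

/-- Corollary 5.4: for a finitely generated group `G` and a sequence of
equivariant `δᵢ`-hyperbolic pseudometrics `dᵢ` with lengths
`ℓᵢ = ∑_{s ∈ S} dᵢ(1,s)` dominating the hyperbolicity constants
(`δᵢ/ℓᵢ → 0`), the rescaled pseudometrics `dᵢ/ℓᵢ` have a subsequence converging
pointwise to a `0`-hyperbolic pseudometric. -/
theorem rescaled_pseudometrics_subseq_converge_zeroHyp
    (G : Type) [Group G] (S : Finset G) (hS : Subgroup.closure (S : Set G) = ⊤)
    (d : ℕ → G → G → ℝ) (δ : ℕ → ℝ) (ℓ : ℕ → ℝ)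
    (hpm : ∀ i, IsPseudoMetric (d i)) (heq : ∀ i, IsEquivariant (d i))
    (hδ : ∀ i, 0 ≤ δ i) (hhyp : ∀ i, IsDeltaHyp (d i) (δ i))
    (hℓ : ∀ i, ℓ i = ∑ s ∈ S, d i 1 s) (hpos : ∀ i, 0 < ℓ i)
    (hdom : Tendsto (fun i => δ i / ℓ i) atTop (nhds 0)) :
    ∃ φ : ℕ → ℕ, StrictMono φ ∧ ∃ D : G → G → ℝ,
      IsPseudoMetric D ∧ IsDeltaHyp D 0 ∧
      ∀ x y : G,
        Tendsto (fun k => d (φ k) x y / ℓ (φ k)) atTop (nhds (D x y)) := by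
  classical
  -- nonnegativity
  have hnn : ∀ i x y, 0 ≤ d i x y := by
    intro i x y
    have h := (hpm i).2.2 x y x
    rw [(hpm i).1, (hpm i).2.1 y x] at h
    linarith
  -- symmetry at 1 for inverses
  have hinv : ∀ i (g : G), d i 1 g⁻¹ = d i 1 g := by
    intro i g
    have h1 := heq i g 1 g⁻¹
    simp only [mul_one, mul_inv_cancel] at h1
    rw [← h1, (hpm i).2.1]
  -- uniform bound
  have hbnd : ∀ g : G, ∃ C : ℝ, ∀ i, d i 1 g ≤ C * ℓ i := by
    intro g
    have hg : g ∈ Subgroup.closure (S : Set G) := hS ▸ Subgroup.mem_top g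
    induction hg using Subgroup.closure_induction with
    | mem s hs =>
      refine ⟨1, fun i => ?_⟩
      rw [one_mul, hℓ i]
      exact Finset.single_le_sum (fun t _ => hnn i 1 t) hs
    | one =>
      refine ⟨0, fun i => ?_⟩
      rw [(hpm i).1, zero_mul]
    | mul x y _ _ ihx ihy =>
      obtain ⟨Cx, hx⟩ := ihx
      obtain ⟨Cy, hy⟩ := ihy
      refine ⟨Cx + Cy, fun i => ?_⟩
      have ht := (hpm i).2.2 1 x (x * y)
      have : d i x (x * y) = d i 1 y := by
        have := heq i x 1 y
        simpa using this
      rw [this] at ht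
      calc d i 1 (x * y) ≤ d i 1 x + d i 1 y := ht
        _ ≤ Cx * ℓ i + Cy * ℓ i := add_le_add (hx i) (hy i)
        _ = (Cx + Cy) * ℓ i := by ring
    | inv x _ ih =>
      obtain ⟨C, hC⟩ := ih
      exact ⟨C, fun i => (hinv i x) ▸ hC i⟩
  choose B hB using hbnd
  -- G is countable
  have hGc : Countable G := by
    set T : Set G := (S : Set G) ∪ (S : Set G)⁻¹ with hT
    have hTfin : T.Finite := S.finite_toSet.union S.finite_toSet.inv
    haveI : Countable T := hTfin.countable.to_subtype
    have hsurj : Function.Surjective (fun l : List T => (l.map Subtype.val).prod) := by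
      intro g
      have hg : g ∈ Subgroup.closure (S : Set G) := hS ▸ Subgroup.mem_top g
      induction hg using Subgroup.closure_induction with
      | mem s hs => exact ⟨[⟨s, Or.inl hs⟩], by simp⟩
      | one => exact ⟨[], by simp⟩
      | mul x y _ _ ihx ihy =>
        obtain ⟨lx, hlx⟩ := ihx
        obtain ⟨ly, hly⟩ := ihy
        have hlx' : (lx.map Subtype.val).prod = x := hlx
        have hly' : (ly.map Subtype.val).prod = y := hly
        exact ⟨lx ++ ly, by
          simp only [List.map_append, List.prod_append, hlx', hly']⟩
      | inv x _ ih =>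
        obtain ⟨l, hl⟩ := ih
        refine ⟨(l.reverse.map (fun t => ⟨t.1⁻¹, ?_⟩)), ?_⟩
        · rcases t.2 with h | h
          · exact Or.inr (by simpa using h)
          · exact Or.inl (by simpa using h)
        · have hl' : (l.map Subtype.val).prod = x := hl
          show _ = x⁻¹
          rw [← hl']
          simp only [List.map_map]
          show (l.reverse.map (fun t : ↑T => (t : G)⁻¹)).prod = (l.map Subtype.val).prod⁻¹
          have hmm : l.reverse.map (fun t : ↑T => (t : G)⁻¹)
              = ((l.map Subtype.val).map Inv.inv).reverse := by
            rw [List.map_map, List.map_reverse]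
            rfl
          rw [hmm, ← List.prod_inv_reverse]
      -- end
    exact hsurj.countable
  haveI := hGc
  -- compactness argument
  set K : Set ((G × G) → ℝ) := Set.univ.pi (fun p => Set.Icc 0 (B p.1 + B p.2)) with hKdef
  have hK : IsCompact K := isCompact_univ_pi (fun p => isCompact_Icc)
  have hmem : ∀ i, (fun p : G × G => d i p.1 p.2 / ℓ i) ∈ K := by
    intro i
    rw [hKdef, Set.mem_univ_pi]
    intro p
    constructor
    · exact div_nonneg (hnn i _ _) (hpos i).le
    · rw [div_le_iff₀ (hpos i)]
      calc d i p.1 p.2 ≤ d i p.1 1 + d i 1 p.2 := (hpm i).2.2 _ _ _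
        _ = d i 1 p.1 + d i 1 p.2 := by rw [(hpm i).2.1 p.1 1]
        _ ≤ B p.1 * ℓ i + B p.2 * ℓ i := add_le_add (hB p.1 i) (hB p.2 i)
        _ = (B p.1 + B p.2) * ℓ i := by ring
  obtain ⟨a, -, φ, hφ, hconv⟩ := hK.isSeqCompact hmem
  have hpt : ∀ x y : G, Tendsto (fun k => d (φ k) x y / ℓ (φ k)) atTop (nhds (a (x, y))) := by
    intro x y
    exact (tendsto_pi_nhds.1 hconv) (x, y)
  refine ⟨φ, hφ, fun x y => a (x, y), ⟨?_, ?_, ?_⟩, ?_, hpt⟩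
  · -- reflexivity
    intro x
    have h0 : Tendsto (fun k => d (φ k) x x / ℓ (φ k)) atTop (nhds 0) := by
      have he : (fun k => d (φ k) x x / ℓ (φ k)) = fun _ => (0 : ℝ) := by
        funext k; rw [(hpm (φ k)).1, zero_div]
      rw [he]
      exact tendsto_const_nhds
    exact tendsto_nhds_unique (hpt x x) h0
  · -- symmetry
    intro x y
    have h0 : Tendsto (fun k => d (φ k) x y / ℓ (φ k)) atTop (nhds (a (y, x))) :=
      (hpt y x).congr (fun k => by rw [(hpm (φ k)).2.1 y x])
    exact tendsto_nhds_unique (hpt x y) h0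
  · -- triangle
    intro x y z
    refine le_of_tendsto_of_tendsto' (hpt x z) ((hpt x y).add (hpt y z)) (fun k => ?_)
    rw [← add_div, div_le_div_iff_of_pos_right (hpos (φ k))]
    exact (hpm (φ k)).2.2 x y z
  · -- 0-hyperbolicity
    have hGP : ∀ u v w : G, Tendsto (fun k => GromovProd (d (φ k)) u v w / ℓ (φ k)) atTop
        (nhds (GromovProd (fun x y => a (x, y)) u v w)) := by
      intro u v w
      have heqf : ∀ k, GromovProd (d (φ k)) u v w / ℓ (φ k)
          = (d (φ k) u w / ℓ (φ k) + d (φ k) v w / ℓ (φ k) - d (φ k) u v / ℓ (φ k)) / 2 := by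
        intro k
        simp only [GromovProd]
        field_simp
      have ht := (((hpt u w).add (hpt v w)).sub (hpt u v)).div_const 2
      simpa only [← heqf, GromovProd] using ht
    intro x y z w
    have hδℓ : Tendsto (fun k => δ (φ k) / ℓ (φ k)) atTop (nhds 0) :=
      hdom.comp hφ.tendsto_atTop
    have hL : Tendsto (fun k => min (GromovProd (d (φ k)) x z w / ℓ (φ k))
        (GromovProd (d (φ k)) y z w / ℓ (φ k)) - δ (φ k) / ℓ (φ k)) atTop
        (nhds (min (GromovProd (fun x y => a (x, y)) x z w)
          (GromovProd (fun x y => a (x, y)) y z w) - 0)) :=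
      ((hGP x z w).min (hGP y z w)).sub hδℓ
    refine le_of_tendsto_of_tendsto' hL (hGP x y w) (fun k => ?_)
    have h := hhyp (φ k) x y z w
    have h2 := (div_le_div_iff_of_pos_right (hpos (φ k))).2 h
    rw [sub_div, ← min_div_div_right (hpos (φ k)).le] at h2
    exact h2
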